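/- arXiv:2205.11325 — 10 statements merged into one kernel-verified Lean document; each statement's English description precedes it below -/
import Mathlib

section
/- In a separation algebra, if σ₂ ≽ σ₁ then there exists a ≽-largest state σᵣ such that σ₂ = σ₁ ⊕ σᵣ; i.e., the subtraction σ₂ ⊖ σ₁ is well-defined. -/
/-- A separation algebra: a partial, commutative, associative operation `op`
with neutral element `e`, a core function `core`, and a stability predicate,
satisfying the axioms of Dardinier et al. -/
structure SepAlgebra (A : Type) where
  op : A → A → Option A
  e : A
  core : A → A
  stable : A → Prop
  comm : ∀ a b, op a b = op b a
  assoc : ∀ a b c ab x, op a b = some ab → op ab c = some x →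
    ∃ bc, op b c = some bc ∧ op a bc = some x
  neutral : ∀ a, op a e = some a
  core_add : ∀ x, op x (core x) = some x
  core_idem : ∀ x, op (core x) (core x) = some (core x)
  core_max : ∀ x c, op x c = some x → ∃ r, op c r = some (core x)
  core_lin : ∀ a b c, op a b = some c → op (core a) (core b) = some (core c)
  stable_e : stable e
  stable_add : ∀ a b c, op a b = some c → stable a → stable b → stable c
  positivity : ∀ a b c, op a b = some c → op c c = some c → op a a = some a
  cancel : ∀ a b x y, op b x = some a → op b y = some a → core x = core y → x = y

/-- `σ2 ≽ σ1` iff `σ2 = σ1 ⊕ σr` for some `σr`. -/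
def SepAlgebra.geq {A : Type} (S : SepAlgebra A) (σ2 σ1 : A) : Prop :=
  ∃ σr, S.op σ1 σr = some σ2

/-- if  then there exists a -largest state 
with , i.e. the subtraction  is well-defined. -/
theorem subtraction_exists {A : Type} (S : SepAlgebra A) (σ1 σ2 : A)
    (h : S.geq σ2 σ1) :
    ∃ σr, S.op σ1 σr = some σ2 ∧
      ∀ σr', S.op σ1 σr' = some σ2 → S.geq σr σr' := by
  -- core is idempotent as a function
  have core_core : ∀ x : A, S.core (S.core x) = S.core x := by
    intro x
    obtain ⟨t, ht⟩ := S.core_max (S.core x) (S.core x) (S.core_idem x)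
    obtain ⟨bc, hbc1, hbc2⟩ := S.assoc (S.core x) (S.core x) t (S.core x)
      (S.core (S.core x)) (S.core_idem x) ht
    -- hbc1 : op (core x) t = bc, but also op (core x) t = core (core x)
    rw [ht] at hbc1
    have hbc : bc = S.core (S.core x) := by injection hbc1.symm
    subst hbc
    have := S.core_add (S.core x)
    rw [this] at hbc2
    injection hbc2 with h
    exact h.symm
  -- for any a with σ1 ⊕ a = σ2, the element a ⊕ core σ2 exists,
  -- sums with σ1 to σ2, and has core = core σ2
  have key : ∀ a, S.op σ1 a = some σ2 →
      ∃ ac, S.op a (S.core σ2) = some ac ∧ S.op σ1 ac = some σ2 ∧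
        S.core ac = S.core σ2 := by
    intro a ha
    obtain ⟨ac, hac1, hac2⟩ := S.assoc σ1 a (S.core σ2) σ2 σ2 ha (S.core_add σ2)
    refine ⟨ac, hac1, hac2, ?_⟩
    -- core ac = core a ⊕ core (core σ2) = core a ⊕ core σ2
    have hlin := S.core_lin a (S.core σ2) ac hac1
    rw [core_core] at hlin
    -- core a ⊕ core σ2 = core σ2 : since core σ1 ⊕ core a = core σ2
    have hlin2 := S.core_lin σ1 a σ2 ha
    have habs : S.op (S.core a) (S.core σ2) = some (S.core σ2) := by
      have hcomm : S.op (S.core a) (S.core σ1) = some (S.core σ2) := by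
        rw [S.comm]; exact hlin2
      obtain ⟨bc, hbc1, hbc2⟩ := S.assoc (S.core a) (S.core a) (S.core σ1)
        (S.core a) (S.core σ2) (S.core_idem a) hcomm
      rw [hcomm] at hbc1
      have : bc = S.core σ2 := by injection hbc1.symm
      subst this
      exact hbc2
    rw [hlin] at habs
    injection habs
  obtain ⟨r, hr⟩ := h
  obtain ⟨rc, hrc1, hrc2, hrc3⟩ := key r hr
  refine ⟨rc, hrc2, ?_⟩
  intro σr' hσr'
  obtain ⟨ac, hac1, hac2, hac3⟩ := key σr' hσr'
  have : rc = ac := S.cancel σ2 σ1 rc ac hrc2 hac2 (hrc3.trans hac3.symm)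
  exact ⟨S.core σ2, this ▸ hac1⟩
end

section
/- The fractional-permission state model forms a separation algebra: the addition of valid states (defined when heaps agree on common domains and permissions sum to at most 1 at each location) is partial, commutative, associative, with the empty state as neutral element, the core |(π,h)| = (λ_.0, h) satisfies the core axioms, and the algebra satisfies positivity and cancellativity. -/
/-- A valid state of the fractional-permission model with a distinguished
`null` location: a permission mask `pi : L → ℚ` with values in `[0,1]`,
zero at `null`, and a partial heap `hp` defined wherever permission is positive. -/
structure VState (L V : Type) (nullL : L) where
  pi : L → ℚ
  hp : L → Option V
  nonneg : ∀ l, 0 ≤ pi l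
  le_one : ∀ l, pi l ≤ 1
  null_zero : pi nullL = 0
  valid : ∀ l, 0 < pi l → (hp l).isSome

/-- Compatibility: heaps agree on the common domain and permissions sum to at most 1. -/
def vcompat {L V : Type} {nullL : L} (s1 s2 : VState L V nullL) : Prop :=
  (∀ l v1 v2, s1.hp l = some v1 → s2.hp l = some v2 → v1 = v2) ∧
  (∀ l, s1.pi l + s2.pi l ≤ 1)

/-- Union of partial heaps. -/
def hunion {V : Type} (o1 o2 : Option V) : Option V :=
  match o1 with
  | some v => some v
  | none => o2

open Classical in
/-- Partial addition of valid states: defined iff the heaps agree on the common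
domain and the permissions sum to at most 1 at each location. -/
noncomputable def vop {L V : Type} {nullL : L} (s1 s2 : VState L V nullL) :
    Option (VState L V nullL) :=
  if h : vcompat s1 s2 then
    some { pi := fun l => s1.pi l + s2.pi l,
           hp := fun l => hunion (s1.hp l) (s2.hp l),
           nonneg := fun l => add_nonneg (s1.nonneg l) (s2.nonneg l),
           le_one := fun l => h.2 l,
           null_zero := by simp [s1.null_zero, s2.null_zero],
           valid := by
             intro l hl
             have hl' : 0 < s1.pi l + s2.pi l := hl
             rcases h1 : s1.hp l with _ | v
             · have h2 : 0 < s2.pi l := by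
                 by_contra hc
                 push_neg at hc
                 have hpos : 0 < s1.pi l := by
                   have := s2.nonneg l
                   linarith
                 have := s1.valid l hpos
                 rw [h1] at this
                 simp at this
               have h2' := s2.valid l h2
               simp only [hunion, h1]
               exact h2'
             · simp [hunion, h1] }
  else none

/-- The empty state. -/
def vEmpty (L V : Type) (nullL : L) : VState L V nullL :=
  { pi := fun _ => 0,
    hp := fun _ => none,
    nonneg := fun _ => le_refl 0,
    le_one := fun _ => by norm_num,
    null_zero := rfl,
    valid := fun _ h => absurd h (by norm_num) }

/-- The core of a state: the same heap with all permissions erased. -/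
def vcore {L V : Type} {nullL : L} (s : VState L V nullL) : VState L V nullL :=
  { pi := fun _ => 0,
    hp := s.hp,
    nonneg := fun _ => le_refl 0,
    le_one := fun _ => by norm_num,
    null_zero := rfl,
    valid := fun _ h => absurd h (by norm_num) }

/-- Stability: positive permission iff the heap value is defined. -/
def vstable {L V : Type} {nullL : L} (s : VState L V nullL) : Prop :=
  ∀ l, 0 < s.pi l ↔ (s.hp l).isSome


lemma vext {L V : Type} {nullL : L} {s t : VState L V nullL}
    (h1 : s.pi = t.pi) (h2 : s.hp = t.hp) : s = t := by
  cases s; cases t; simp_all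

lemma vop_eq_some {L V : Type} {nullL : L} {a b c : VState L V nullL}
    (h : vcompat a b) (h1 : ∀ l, a.pi l + b.pi l = c.pi l)
    (h2 : ∀ l, hunion (a.hp l) (b.hp l) = c.hp l) : vop a b = some c := by
  unfold vop; rw [dif_pos h]; congr 1
  exact vext (funext h1) (funext h2)

lemma vop_some_elim {L V : Type} {nullL : L} {a b c : VState L V nullL}
    (h : vop a b = some c) :
    vcompat a b ∧ (∀ l, c.pi l = a.pi l + b.pi l) ∧
      (∀ l, c.hp l = hunion (a.hp l) (b.hp l)) := by
  unfold vop at h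
  split at h
  · next hc =>
      injection h with h
      subst h
      exact ⟨hc, fun l => rfl, fun l => rfl⟩
  · exact absurd h (by simp)

/-- the fractional-permission state model forms a separation
algebra: the partial addition is commutative and associative with the empty
state as neutral element, the core satisfies the core axioms, stability is
preserved, and the algebra satisfies positivity and cancellativity. -/
theorem fracModel_is_sepAlgebra (L V : Type) (nullL : L) :
    (∀ a b : VState L V nullL, vop a b = vop b a) ∧
    (∀ a b c ab x : VState L V nullL, vop a b = some ab → vop ab c = some x →
        ∃ bc, vop b c = some bc ∧ vop a bc = some x) ∧
    (∀ a : VState L V nullL, vop a (vEmpty L V nullL) = some a) ∧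
    (∀ x : VState L V nullL, vop x (vcore x) = some x) ∧
    (∀ x : VState L V nullL, vop (vcore x) (vcore x) = some (vcore x)) ∧
    (∀ x c : VState L V nullL, vop x c = some x → ∃ r, vop c r = some (vcore x)) ∧
    (∀ a b c : VState L V nullL, vop a b = some c →
        vop (vcore a) (vcore b) = some (vcore c)) ∧
    vstable (vEmpty L V nullL) ∧
    (∀ a b c : VState L V nullL, vop a b = some c →
        vstable a → vstable b → vstable c) ∧
    (∀ a b c : VState L V nullL, vop a b = some c → vop c c = some c →
        vop a a = some a) ∧
    (∀ a b x y : VState L V nullL, vop b x = some a → vop b y = some a →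
        vcore x = vcore y → x = y) := by

  refine ⟨?_, ?_, ?_, ?_, ?_, ?_, ?_, ?_, ?_, ?_, ?_⟩
  · -- commutativity
    intro a b
    have hcs : vcompat a b ↔ vcompat b a := by
      constructor <;> exact fun ⟨h1, h2⟩ =>
        ⟨fun l v1 v2 ha hb => (h1 l v2 v1 hb ha).symm, fun l => by linarith [h2 l]⟩
    unfold vop
    by_cases h : vcompat a b
    · rw [dif_pos h, dif_pos (hcs.mp h)]
      congr 1
      refine vext (funext fun l => by ring) (funext fun l => ?_)
      rcases ha : a.hp l with _ | va <;> rcases hb : b.hp l with _ | vb <;>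
        simp [hunion, ha, hb]
      exact h.1 l va vb ha hb
    · rw [dif_neg h, dif_neg (fun h' => h (hcs.mpr h'))]
  · -- associativity
    intro a b c ab x hab habc
    obtain ⟨⟨habh, habp⟩, habpi, habhp⟩ := vop_some_elim hab
    obtain ⟨⟨hxh, hxp⟩, hxpi, hxhp⟩ := vop_some_elim habc
    have hbc : vcompat b c := by
      constructor
      · intro l v1 v2 hb hc
        have hab' : ab.hp l = some v1 := by
          rw [habhp l]
          rcases ha : a.hp l with _ | va
          · simp [hunion, ha, hb]
          · simp [hunion, ha, habh l va v1 ha hb]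
        exact hxh l v1 v2 hab' hc
      · intro l
        have := hxp l
        rw [habpi l] at this
        have := a.nonneg l
        linarith
    obtain ⟨bc, hbceq⟩ : ∃ bc, vop b c = some bc :=
      ⟨_, by unfold vop; rw [dif_pos hbc]⟩
    obtain ⟨_, hbcpi, hbchp⟩ := vop_some_elim hbceq
    refine ⟨bc, hbceq, ?_⟩
    have hcompat : vcompat a bc := by
      constructor
      · intro l v1 v2 ha hbc'
        rw [hbchp l] at hbc'
        simp only [hunion] at hbc'
        rcases hb : b.hp l with _ | vb
        · rw [hb] at hbc'
          have hab' : ab.hp l = some v1 := by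
            rw [habhp l]; simp [hunion, ha]
          exact hxh l v1 v2 hab' hbc'
        · rw [hb] at hbc'
          injection hbc' with hv; subst hv
          exact habh l v1 _ ha hb
      · intro l
        have := hxp l
        rw [habpi l] at this
        rw [hbcpi l]
        linarith
    refine vop_eq_some hcompat (fun l => ?_) (fun l => ?_)
    · rw [hxpi l, habpi l, hbcpi l]; ring
    · rw [hxhp l, habhp l, hbchp l]
      rcases a.hp l with _ | va <;> simp [hunion]
  · -- neutral
    intro a
    have hc : vcompat a (vEmpty L V nullL) := by
      constructor
      · intro l v1 v2 _ h2
        simp [vEmpty] at h2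
      · intro l
        simpa [vEmpty] using a.le_one l
    refine vop_eq_some hc (fun l => by simp [vEmpty]) (fun l => ?_)
    rcases a.hp l with _ | v <;> simp [hunion, vEmpty]
  · -- x ⊕ core x = x
    intro x
    have hc : vcompat x (vcore x) := by
      constructor
      · intro l v1 v2 h1 h2
        simp only [vcore] at h2
        rw [h1] at h2; injection h2
      · intro l; simpa [vcore] using x.le_one l
    refine vop_eq_some hc (fun l => by simp [vcore]) (fun l => ?_)
    simp only [vcore]
    rcases h : x.hp l with _ | v <;> simp [hunion, h]
  · -- core ⊕ core = core
    intro x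
    have hc : vcompat (vcore x) (vcore x) := by
      constructor
      · intro l v1 v2 h1 h2
        rw [h1] at h2; injection h2
      · intro l; simp [vcore]
    refine vop_eq_some hc (fun l => by simp [vcore]) (fun l => ?_)
    simp only [vcore]
    rcases h : x.hp l with _ | v <;> simp [hunion, h]
  · -- x = x ⊕ c → ∃ r, c ⊕ r = core x
    intro x c h
    obtain ⟨⟨hh, hp⟩, hpi, hhp⟩ := vop_some_elim h
    have hczero : ∀ l, c.pi l = 0 := by
      intro l
      have := hpi l
      linarith
    have hchp : ∀ l v, c.hp l = some v → x.hp l = some v := by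
      intro l v hv
      have := hhp l
      rcases hx : x.hp l with _ | u
      · rw [hx, hv] at this
        simp [hunion] at this
      · exact congrArg some (hh l u v hx hv)
    refine ⟨vcore x, ?_⟩
    have hc : vcompat c (vcore x) := by
      constructor
      · intro l v1 v2 h1 h2
        simp only [vcore] at h2
        have := hchp l v1 h1
        rw [this] at h2; injection h2
      · intro l; simpa [vcore, hczero l] using (by norm_num : (0:ℚ) ≤ 1)
    refine vop_eq_some hc (fun l => by simp [vcore, hczero l]) (fun l => ?_)
    simp only [vcore]
    rcases hcl : c.hp l with _ | v
    · simp [hunion]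
    · simp [hunion, (hchp l v hcl).symm]
  · -- core homomorphism
    intro a b c h
    obtain ⟨⟨hh, hp⟩, hpi, hhp⟩ := vop_some_elim h
    have hc : vcompat (vcore a) (vcore b) := ⟨fun l v1 v2 h1 h2 => hh l v1 v2 h1 h2,
      fun l => by simp [vcore]⟩
    refine vop_eq_some hc (fun l => by simp [vcore]) (fun l => ?_)
    simp only [vcore]
    exact (hhp l).symm
  · -- stability of empty
    intro l
    simp [vEmpty]
  · -- stability closure
    intro a b c h sa sb
    obtain ⟨⟨hh, hp⟩, hpi, hhp⟩ := vop_some_elim h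
    intro l
    constructor
    · intro hpos
      exact c.valid l hpos
    · intro hs
      rw [hhp l] at hs
      rw [hpi l]
      rcases ha : a.hp l with _ | va
      · rw [ha] at hs
        simp only [hunion] at hs
        have := (sb l).mpr hs
        have := a.nonneg l
        linarith
      · have : (a.hp l).isSome := by simp [ha]
        have := (sa l).mpr this
        have := b.nonneg l
        linarith
  · -- positivity
    intro a b c h hcc
    obtain ⟨⟨hh, hp⟩, hpi, hhp⟩ := vop_some_elim h
    obtain ⟨_, hcpi, _⟩ := vop_some_elim hcc
    have hc0 : ∀ l, c.pi l = 0 := fun l => by have := hcpi l; linarith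
    have ha0 : ∀ l, a.pi l = 0 := by
      intro l
      have := hpi l
      have := a.nonneg l
      have := b.nonneg l
      have := hc0 l
      linarith
    have hca : vcompat a a := ⟨fun l v1 v2 h1 h2 => by rw [h1] at h2; injection h2,
      fun l => by simp [ha0 l]⟩
    refine vop_eq_some hca (fun l => by simp [ha0 l]) (fun l => ?_)
    rcases hal : a.hp l with _ | v <;> simp [hunion, hal]
  · -- cancellativity
    intro a b x y hx hy hcore
    obtain ⟨_, hxpi, _⟩ := vop_some_elim hx
    obtain ⟨_, hypi, _⟩ := vop_some_elim hy
    refine vext (funext fun l => ?_) ?_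
    · have := hxpi l; have := hypi l; linarith
    · have := congrArg (fun s : VState L V nullL => s.hp) hcore
      exact this
end

section
/- Splitting of fractional assertions is always sound: for any assertion A and positive rationals p, q with p + q ≤ 1, A^{p+q} entails A^p * A^q. -/
/-- A state of the fractional-permission model: a permission mask
`pi : L → ℚ` (with values in `[0,1]`) and a partial heap `hp : L → Option V`,
subject to the validity condition that positive permission implies a defined value. -/
structure FState (L V : Type) where
  pi : L → ℚ
  hp : L → Option V
  nonneg : ∀ l, 0 ≤ pi l
  le_one : ∀ l, pi l ≤ 1
  valid : ∀ l, 0 < pi l → (hp l).isSome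

/-- Compatibility: heaps agree on the common domain and permissions sum to at most 1. -/
def compat {L V : Type} (s1 s2 : FState L V) : Prop :=
  (∀ l v1 v2, s1.hp l = some v1 → s2.hp l = some v2 → v1 = v2) ∧
  (∀ l, s1.pi l + s2.pi l ≤ 1)

open Classical in
/-- Partial addition of states. -/
noncomputable def fadd {L V : Type} (s1 s2 : FState L V) : Option (FState L V) :=
  if h : compat s1 s2 then
    some { pi := fun l => s1.pi l + s2.pi l,
           hp := fun l => hunion (s1.hp l) (s2.hp l),
           nonneg := fun l => add_nonneg (s1.nonneg l) (s2.nonneg l),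
           le_one := fun l => h.2 l,
           valid := by
             intro l hl
             have hl' : 0 < s1.pi l + s2.pi l := hl
             rcases h1 : s1.hp l with _ | v
             · have h2 : 0 < s2.pi l := by
                 by_contra hc
                 push_neg at hc
                 have hpos : 0 < s1.pi l := by
                   have := s2.nonneg l
                   linarith
                 have := s1.valid l hpos
                 rw [h1] at this
                 simp at this
               have h2' := s2.valid l h2
               simp only [hunion, h1]
               exact h2'
             · simp [hunion, h1] }
  else none

/-- `t` is the state `s` with all permissions multiplied by `α` (same heap). -/
def isSmul {L V : Type} (α : ℚ) (s t : FState L V) : Prop :=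
  (∀ l, t.pi l = α * s.pi l) ∧ t.hp = s.hp

/-- Separating conjunction. -/
def satStar {L V : Type} (A B : FState L V → Prop) (σ : FState L V) : Prop :=
  ∃ σ1 σ2, fadd σ1 σ2 = some σ ∧ A σ1 ∧ B σ2

/-- Fractional assertion `A^p`. -/
def fracSat {L V : Type} (p : ℚ) (A : FState L V → Prop) (σ : FState L V) : Prop :=
  ∃ σ', A σ' ∧ isSmul p σ' σ

/-- Standard magic wand. -/
def satWand {L V : Type} (A B : FState L V → Prop) (σw : FState L V) : Prop :=
  ∀ σA σ, A σA → fadd σA σw = some σ → B σ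

/-- Order induced by ⊕. -/
def fgeq {L V : Type} (σ2 σ1 : FState L V) : Prop :=
  ∃ r, fadd σ1 r = some σ2

/-- `B` is intuitionistic: closed under state extension. -/
def intuit {L V : Type} (B : FState L V → Prop) : Prop :=
  ∀ σ σ' r, B σ → fadd σ r = some σ' → B σ'

/-- `A` is combinable: `A^p * A^q ⊨ A^{p+q}`. -/
def combinable {L V : Type} (A : FState L V → Prop) : Prop :=
  ∀ p q : ℚ, 0 < p → 0 < q → p + q ≤ 1 →
    ∀ σ, satStar (fracSat p A) (fracSat q A) σ → fracSat (p + q) A σ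

/-- Some scaling of `σw` (by `0 < α ≤ 1`) is compatible with `σA`. -/
def scaledCompat {L V : Type} (σA σw : FState L V) : Prop :=
  ∃ α t, 0 < α ∧ α ≤ 1 ∧ isSmul α σw t ∧ compat σA t

/-- Truncation of `σw` so that it fits next to `σA`. -/
def trunc {L V : Type} (sA sw : FState L V) : FState L V :=
  { pi := fun l => min (sw.pi l) (1 - sA.pi l),
    hp := sw.hp,
    nonneg := fun l => le_min (sw.nonneg l) (by linarith [sA.le_one l]),
    le_one := fun l => le_trans (min_le_left _ _) (sw.le_one l),
    valid := fun l hl => sw.valid l (lt_of_lt_of_le hl (min_le_left _ _)) }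

open Classical in
/-- The transformation `R(σA, σw)` used in the definition of combinable wands. -/
noncomputable def Rtrans {L V : Type} (σA σw : FState L V) : FState L V :=
  if scaledCompat σA σw then trunc σA σw else σw

/-- Combinable magic wand `A -*c B`. -/
def satCWand {L V : Type} (A B : FState L V → Prop) (σw : FState L V) : Prop :=
  ∀ σA σ, A σA → fadd σA (Rtrans σA σw) = some σ → B σ

/-- A stable state: positive permission iff the heap value is defined. -/
def fstable {L V : Type} (σ : FState L V) : Prop :=
  ∀ l, 0 < σ.pi l ↔ (σ.hp l).isSome

open Classical in
/-- The state with permission `q` and value `v` at the single location `l0`. -/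
noncomputable def single {L V : Type} (l0 : L) (v : V) (q : ℚ)
    (h0 : 0 ≤ q) (h1 : q ≤ 1) : FState L V :=
  { pi := fun l => if l = l0 then q else 0,
    hp := fun l => if l = l0 then some v else none,
    nonneg := by intro l; by_cases h : l = l0 <;> simp [h, h0]
    le_one := by intro l; by_cases h : l = l0 <;> simp [h, h1]
    valid := by
      intro l hl
      by_cases h : l = l0 <;> simp [h] at hl ⊢ }

/-- The binary restriction of a state. -/
noncomputable def binState {L V : Type} (σ : FState L V) : FState L V :=
  { pi := fun l => if σ.pi l = 1 then 1 else 0,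
    hp := σ.hp,
    nonneg := by intro l; show 0 ≤ if σ.pi l = 1 then (1:ℚ) else 0; split <;> norm_num,
    le_one := by intro l; show (if σ.pi l = 1 then (1:ℚ) else 0) ≤ 1; split <;> norm_num,
    valid := by
      intro l hl
      have hl' : 0 < if σ.pi l = 1 then (1:ℚ) else 0 := hl
      split at hl'
      · next h => exact σ.valid l (by rw [h]; norm_num)
      · simp at hl' }

/-- `A` is a binary assertion. -/
def binaryAssertion {L V : Type} (A : FState L V → Prop) : Prop :=
  ∀ σ, A σ → A (binState σ)

/-- Heaps agree on the common domain. -/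
def heapCompat {L V : Type} (s1 s2 : FState L V) : Prop :=
  ∀ l v1 v2, s1.hp l = some v1 → s2.hp l = some v2 → v1 = v2

theorem FState.ext' {L V : Type} {s t : FState L V}
    (h1 : s.pi = t.pi) (h2 : s.hp = t.hp) : s = t := by
  cases s; cases t; simp_all

def scaleState {L V : Type} (α : ℚ) (hα0 : 0 < α) (hα1 : α ≤ 1) (s : FState L V) :
    FState L V :=
  { pi := fun l => α * s.pi l,
    hp := s.hp,
    nonneg := fun l => mul_nonneg hα0.le (s.nonneg l),
    le_one := fun l => by
      show α * s.pi l ≤ 1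
      nlinarith [s.nonneg l, s.le_one l],
    valid := fun l hl => by
      have hl' : 0 < α * s.pi l := hl
      exact s.valid l (by nlinarith [s.nonneg l]) }

/-- splitting of fractional assertions is always sound:
`A^{p+q} ⊨ A^p * A^q` for positive `p`, `q` with `p + q ≤ 1`. -/
theorem frac_split_sound {L V : Type} (A : FState L V → Prop) (p q : ℚ)
    (hp : 0 < p) (hq : 0 < q) (hpq : p + q ≤ 1) (σ : FState L V)
    (h : fracSat (p + q) A σ) :
    satStar (fracSat p A) (fracSat q A) σ := by
  obtain ⟨σ', hA, hpi, hhp⟩ := h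
  have hp1 : p ≤ 1 := by linarith
  have hq1 : q ≤ 1 := by linarith
  refine ⟨scaleState p hp hp1 σ', scaleState q hq hq1 σ', ?_, ⟨σ', hA, fun l => rfl, rfl⟩,
    ⟨σ', hA, fun l => rfl, rfl⟩⟩
  have hc : compat (scaleState p hp hp1 σ') (scaleState q hq hq1 σ') := by
    constructor
    · intro l v1 v2 h1 h2
      simp only [scaleState] at h1 h2
      rw [h1] at h2; exact (Option.some.injEq _ _).mp h2
    · intro l
      show p * σ'.pi l + q * σ'.pi l ≤ 1
      nlinarith [σ'.nonneg l, σ'.le_one l]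
  rw [fadd, dif_pos hc]
  congr 1
  apply FState.ext'
  · funext l
    show p * σ'.pi l + q * σ'.pi l = σ.pi l
    rw [hpi l]; ring
  · funext l
    show hunion (σ'.hp l) (σ'.hp l) = σ.hp l
    rw [hhp]
    cases h : σ'.hp l <;> simp [hunion, h]
end

section
/- The disjunction acc(x.f) ∨ acc(x.g) of full permissions to two distinct locations is not combinable: there exists a state satisfying (acc(x.f) ∨ acc(x.g))^{1/2} * (acc(x.f) ∨ acc(x.g))^{1/2} that does not satisfy acc(x.f) ∨ acc(x.g). -/
/-- The disjunction `acc(x.f) ∨ acc(x.g)` (intuitionistic reading). -/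
def accDisj {L V : Type} (lf lg : L) (σ : FState L V) : Prop :=
  1 ≤ σ.pi lf ∨ 1 ≤ σ.pi lg

/-- `acc(x.f) ∨ acc(x.g)` is not combinable: some state
satisfies `(acc(x.f) ∨ acc(x.g))^{1/2} * (acc(x.f) ∨ acc(x.g))^{1/2}` but not
`acc(x.f) ∨ acc(x.g)`. -/
theorem accDisj_not_combinable {L V : Type} (lf lg : L) (hne : lf ≠ lg) (v : V) :
    ∃ σ : FState L V,
      satStar (fracSat (1/2) (accDisj lf lg)) (fracSat (1/2) (accDisj lf lg)) σ ∧
      ¬ accDisj lf lg σ := by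
  set σ1 := single (V := V) lf v (1/2) (by norm_num) (by norm_num) with hσ1
  set σ2 := single (V := V) lg v (1/2) (by norm_num) (by norm_num) with hσ2
  have hcompat : compat σ1 σ2 := by
    constructor
    · intro l v1 v2 h1 h2
      simp only [σ1, σ2, single] at h1 h2
      split at h1
      · next h => subst h; rw [if_neg hne] at h2; exact absurd h2 (by simp)
      · exact absurd h1 (by simp)
    · intro l
      simp only [σ1, σ2, single]
      split <;> split <;> norm_num
  obtain ⟨σ, hσ⟩ : ∃ σ, fadd σ1 σ2 = some σ := by
    rw [fadd, dif_pos hcompat]; exact ⟨_, rfl⟩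
  refine ⟨σ, ⟨σ1, σ2, hσ, ?_, ?_⟩, ?_⟩
  · exact ⟨single lf v 1 (by norm_num) le_rfl, Or.inl (by simp [single]),
      fun l => by by_cases h : l = lf <;> simp [σ1, single, h], rfl⟩
  · exact ⟨single lg v 1 (by norm_num) le_rfl, Or.inr (by simp [single]),
      fun l => by by_cases h : l = lg <;> simp [σ2, single, h], rfl⟩
  · have hpi : ∀ l, σ.pi l = σ1.pi l + σ2.pi l := by
      rw [fadd, dif_pos hcompat] at hσ
      intro l; rw [← Option.some_inj.mp hσ]
    intro hd
    rcases hd with h | h <;> rw [hpi] at h <;>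
      simp [σ1, σ2, single, hne, Ne.symm hne] at h <;> norm_num at h
end

section
/- The standard magic wand is not combinable in general: for the wand w := acc(x.f, 1/2) -* acc(x.g) over distinct locations l_f ≠ l_g, the state σ_f with full permission to l_f only and the state σ_g with full permission to l_g only both satisfy w, but (1/2)·σ_f ⊕ (1/2)·σ_g does not satisfy w. -/
lemma fadd_pi {L V : Type} {s1 s2 σ : FState L V} (h : fadd s1 s2 = some σ) :
    (∀ l, σ.pi l = s1.pi l + s2.pi l) ∧ (∀ l, σ.hp l = hunion (s1.hp l) (s2.hp l)) := by
  unfold fadd at h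
  split at h
  · cases h
    exact ⟨fun l => rfl, fun l => rfl⟩
  · cases h

lemma fadd_compat {L V : Type} {s1 s2 σ : FState L V} (h : fadd s1 s2 = some σ) :
    compat s1 s2 := by
  unfold fadd at h
  split at h
  · assumption
  · cases h

/-- the standard wand `w := acc(x.f, 1/2) -* acc(x.g)` is not
combinable: the state `σf` with full permission to `lf` only and the state `σg`
with full permission to `lg` only both satisfy `w`, but
`(1/2)·σf ⊕ (1/2)·σg` does not satisfy `w`. -/
theorem wand_not_combinable {L V : Type} (lf lg : L) (hne : lf ≠ lg) (v : V) :
    satWand (fun σ => (1:ℚ)/2 ≤ σ.pi lf) (fun σ => 1 ≤ σ.pi lg)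
        (single lf v 1 (by norm_num) (by norm_num)) ∧
    satWand (fun σ => (1:ℚ)/2 ≤ σ.pi lf) (fun σ => 1 ≤ σ.pi lg)
        (single lg v 1 (by norm_num) (by norm_num)) ∧
    (∀ t1 t2 σ : FState L V,
        isSmul (1/2) (single lf v 1 (by norm_num) (by norm_num)) t1 →
        isSmul (1/2) (single lg v 1 (by norm_num) (by norm_num)) t2 →
        fadd t1 t2 = some σ →
        ¬ satWand (fun σ' => (1:ℚ)/2 ≤ σ'.pi lf) (fun σ' => 1 ≤ σ'.pi lg) σ) := by
  refine ⟨?_, ?_, ?_⟩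
  · intro σA σ hA hsum
    have hc := (fadd_compat hsum).2 lf
    simp [single] at hc
    linarith
  · intro σA σ hA hsum
    have hpi := (fadd_pi hsum).1 lg
    simp [single] at hpi
    linarith [σ.le_one lg, σA.nonneg lg, hpi ▸ σ.le_one lg]
  · intro t1 t2 σ h1 h2 hsum hw
    have hpi := (fadd_pi hsum).1
    have hhp := (fadd_pi hsum).2
    have hσf : σ.pi lf = 1/2 := by
      have := hpi lf
      rw [h1.1 lf, h2.1 lf] at this
      simp [single, hne] at this
      linarith
    have hσg : σ.pi lg = 1/2 := by
      have := hpi lg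
      rw [h1.1 lg, h2.1 lg] at this
      simp [single, hne, Ne.symm hne] at this
      linarith
    have hhf : σ.hp lf = some v := by
      have := hhp lf
      rw [h1.2, h2.2] at this
      simpa [single, hunion] using this
    -- take σA = single lf v (1/2)
    set σA : FState L V := single lf v (1/2) (by norm_num) (by norm_num) with hσA
    have hcomp : compat σA σ := by
      constructor
      · intro l v1 v2 hv1 hv2
        by_cases hl : l = lf
        · subst hl
          simp [hσA, single] at hv1
          rw [hhf] at hv2
          cases hv2
          exact hv1.symm
        · simp [hσA, single, hl] at hv1
      · intro l
        by_cases hl : l = lf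
        · subst hl; simp [hσA, single]; linarith [hσf]
        · have := σ.le_one l
          simp [hσA, single, hl]
          linarith
    obtain ⟨σ', hσ'⟩ : ∃ σ', fadd σA σ = some σ' := by
      have hne' : fadd σA σ ≠ none := by
        unfold fadd
        rw [dif_pos hcomp]
        simp
      exact Option.ne_none_iff_exists'.mp hne'
    have hB := hw σA σ' (by simp [hσA, single]) hσ'
    have := (fadd_pi hσ').1 lg
    simp [hσA, single, Ne.symm hne] at this
    rw [hσg] at this
    simp at hB
    rw [this] at hB
    norm_num at hB
end

section
/- The combinable wand entails the standard wand: for any assertions A and B with B intuitionistic, A -*c B ⊨ A -* B. -/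
/-- the combinable wand entails the standard wand:
for `B` intuitionistic, `A -*c B ⊨ A -* B`. -/
theorem cwand_entails_wand {L V : Type} (A B : FState L V → Prop)
    (hB : intuit B) (σw : FState L V) (h : satCWand A B σw) :
    satWand A B σw := by
  intro σA σ hA hadd
  have hc : compat σA σw := by
    by_contra hc
    rw [fadd, dif_neg hc] at hadd
    cases hadd
  have hsc : scaledCompat σA σw := by
    refine ⟨1, σw, one_pos, le_refl 1, ⟨fun l => (one_mul _).symm, rfl⟩, hc⟩
  have htr : trunc σA σw = σw := by
    cases σw with
    | mk pi hp n o v =>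
      simp only [trunc, FState.mk.injEq]
      constructor
      · funext l
        exact min_eq_left (by linarith [hc.2 l])
      · trivial
  have hR : Rtrans σA σw = σw := by rw [Rtrans, if_pos hsc, htr]
  exact h σA σ hA (by rw [hR]; exact hadd)
end

section
/- If B is intuitionistic and combinable, then the combinable wand A -*c B is combinable: for positive rationals p, q with p + q ≤ 1, (A -*c B)^p * (A -*c B)^q ⊨ (A -*c B)^{p+q}. -/
/- ------------------- Auxiliary lemmas ------------------- -/

theorem fext {L V : Type} {s t : FState L V}
    (h1 : ∀ l, s.pi l = t.pi l) (h2 : ∀ l, s.hp l = t.hp l) : s = t := by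
  cases s; cases t
  simp only [FState.mk.injEq]
  exact ⟨funext h1, funext h2⟩

theorem fadd_inv {L V : Type} {s1 s2 σ : FState L V} (h : fadd s1 s2 = some σ) :
    compat s1 s2 ∧ (∀ l, σ.pi l = s1.pi l + s2.pi l) ∧
      (∀ l, σ.hp l = hunion (s1.hp l) (s2.hp l)) := by
  rw [fadd] at h
  split at h
  · next hc =>
    obtain rfl := Option.some.inj h
    exact ⟨hc, fun l => rfl, fun l => rfl⟩
  · exact absurd h (by simp)

theorem fadd_total {L V : Type} {s1 s2 : FState L V} (h : compat s1 s2) :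
    ∃ t, fadd s1 s2 = some t ∧ (∀ l, t.pi l = s1.pi l + s2.pi l) ∧
      (∀ l, t.hp l = hunion (s1.hp l) (s2.hp l)) := by
  rw [fadd, dif_pos h]
  exact ⟨_, rfl, fun l => rfl, fun l => rfl⟩

theorem hunion_none_left {V : Type} (o : Option V) : hunion none o = o := rfl

theorem hunion_some_left {V : Type} (v : V) (o : Option V) :
    hunion (some v) o = some v := rfl

theorem hunion_eq_some {V : Type} {o1 o2 : Option V} {v : V}
    (h : hunion o1 o2 = some v) : o1 = some v ∨ (o1 = none ∧ o2 = some v) := by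
  cases o1 with
  | none => exact Or.inr ⟨rfl, h⟩
  | some a => exact Or.inl h

theorem hunion_self {V : Type} (o : Option V) : hunion o o = o := by
  cases o <;> rfl

theorem trunc_pi {L V : Type} (sA sw : FState L V) (l : L) :
    (trunc sA sw).pi l = min (sw.pi l) (1 - sA.pi l) := rfl

theorem trunc_hp {L V : Type} (sA sw : FState L V) : (trunc sA sw).hp = sw.hp := rfl

/-- Scaling of a state by a factor `c ∈ [0,1]`. -/
noncomputable def ssm {L V : Type} (c : ℚ) (h0 : 0 ≤ c) (h1 : c ≤ 1)
    (s : FState L V) : FState L V :=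
  { pi := fun l => c * s.pi l,
    hp := s.hp,
    nonneg := fun l => mul_nonneg h0 (s.nonneg l),
    le_one := fun l => by
      show c * s.pi l ≤ 1
      nlinarith [s.nonneg l, s.le_one l],
    valid := fun l hl => s.valid l (by
      have hl' : 0 < c * s.pi l := hl
      by_contra hc
      push_neg at hc
      have : c * s.pi l ≤ 0 := mul_nonpos_of_nonneg_of_nonpos h0 hc
      linarith) }

theorem ssm_pi {L V : Type} (c : ℚ) (h0 : 0 ≤ c) (h1 : c ≤ 1) (s : FState L V)
    (l : L) : (ssm c h0 h1 s).pi l = c * s.pi l := rfl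

theorem ssm_hp {L V : Type} (c : ℚ) (h0 : 0 ≤ c) (h1 : c ≤ 1) (s : FState L V) :
    (ssm c h0 h1 s).hp = s.hp := rfl

/-- if `B` is intuitionistic and combinable, then the combinable
wand `A -*c B` is combinable. -/
theorem cwand_combinable {L V : Type} (A B : FState L V → Prop)
    (hBi : intuit B) (hBc : combinable B) :
    combinable (satCWand A B) := by
  intro p q hp hq hpq σ hstar
  obtain ⟨σ1, σ2, hadd, ⟨w1, hw1, hs1⟩, ⟨w2, hw2, hs2⟩⟩ := hstar
  obtain ⟨hc12, hσpi, hσhp⟩ := fadd_inv hadd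
  have hs : (0:ℚ) < p + q := by linarith
  have hsne : p + q ≠ 0 := ne_of_gt hs
  -- pointwise description of σ in terms of w1, w2
  have hpi12 : ∀ l, σ.pi l = p * w1.pi l + q * w2.pi l := fun l => by
    rw [hσpi l, hs1.1 l, hs2.1 l]
  have hhp12 : ∀ l, σ.hp l = hunion (w1.hp l) (w2.hp l) := fun l => by
    rw [hσhp l, hs1.2, hs2.2]
  have hheap12 : ∀ l v1 v2, w1.hp l = some v1 → w2.hp l = some v2 → v1 = v2 := by
    intro l v1 v2 h1 h2
    exact hc12.1 l v1 v2 (by rw [hs1.2]; exact h1) (by rw [hs2.2]; exact h2)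
  have hwle : ∀ l, σ.pi l ≤ p + q := fun l => by
    have h1 := mul_le_mul_of_nonneg_left (w1.le_one l) hp.le
    have h2 := mul_le_mul_of_nonneg_left (w2.le_one l) hq.le
    have := hpi12 l
    linarith
  -- the witness state w with σ = (p+q) • w
  have hwex : ∃ w : FState L V, (∀ l, w.pi l = σ.pi l / (p+q)) ∧ w.hp = σ.hp := by
    refine ⟨⟨fun l => σ.pi l / (p+q), σ.hp, ?_, ?_, ?_⟩, fun l => rfl, rfl⟩
    · exact fun l => div_nonneg (σ.nonneg l) hs.le
    · intro l; rw [div_le_one hs]; exact hwle l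
    · intro l hl
      refine σ.valid l ?_
      by_contra hc
      push_neg at hc
      have : σ.pi l / (p+q) ≤ 0 := div_nonpos_of_nonpos_of_nonneg hc hs.le
      exact absurd hl (by simpa using this)
  obtain ⟨w, hwpi, hwhp⟩ := hwex
  -- convenient abbreviations
  set P : ℚ := p / (p+q) with hPdef
  set Q : ℚ := q / (p+q) with hQdef
  have hP0 : 0 < P := div_pos hp hs
  have hQ0 : 0 < Q := div_pos hq hs
  have hPQ : P + Q = 1 := by rw [hPdef, hQdef]; field_simp
  have hP1 : P ≤ 1 := by linarith
  have hQ1 : Q ≤ 1 := by linarith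
  have hwconv : ∀ l, w.pi l = P * w1.pi l + Q * w2.pi l := fun l => by
    rw [hwpi l, hpi12 l, hPdef, hQdef]
    field_simp
  have hW : ∀ l, w.hp l = hunion (w1.hp l) (w2.hp l) := fun l => by
    rw [hwhp]; exact hhp12 l
  refine ⟨w, ?_, fun l => by rw [hwpi l]; field_simp, hwhp.symm⟩
  -- main goal: w satisfies the combinable wand
  intro σA σ' hA hfadd
  have hsc : scaledCompat σA w := by
    by_contra hn
    rw [Rtrans, if_neg hn] at hfadd
    exact hn ⟨1, w, one_pos, le_refl 1, ⟨fun l => (one_mul _).symm, rfl⟩,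
      (fadd_inv hfadd).1⟩
  rw [Rtrans, if_pos hsc] at hfadd
  obtain ⟨hcA, hApi, hAhp⟩ := fadd_inv hfadd
  have hheapAw : ∀ l v1 v2, σA.hp l = some v1 → w.hp l = some v2 → v1 = v2 :=
    fun l v1 v2 h1 h2 => hcA.1 l v1 v2 h1 (by rw [trunc_hp]; exact h2)
  obtain ⟨α, t, hα0, hα1, ⟨htpi, hthp⟩, htc⟩ := hsc
  have hkey : ∀ l, σA.pi l + α * w.pi l ≤ 1 := fun l => by
    have := htc.2 l
    rw [htpi l] at this
    exact this
  -- heap agreement of σA with w1 and w2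
  have hA1 : ∀ l v1 v2, σA.hp l = some v1 → w1.hp l = some v2 → v1 = v2 := by
    intro l v1 v2 h1 h2
    exact hheapAw l v1 v2 h1 (by rw [hW l, h2, hunion_some_left])
  have hA2 : ∀ l v1 v2, σA.hp l = some v1 → w2.hp l = some v2 → v1 = v2 := by
    intro l v1 v2 h1 h2
    refine hheapAw l v1 v2 h1 ?_
    rw [hW l]
    cases hx : w1.hp l with
    | none => rw [hunion_none_left, h2]
    | some u =>
      obtain rfl := hheap12 l u v2 hx h2
      rw [hunion_some_left]
  -- scaled compatibility of σA with w1 and w2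
  have hbound1 : ∀ l, σA.pi l + α * P * w1.pi l ≤ 1 := fun l => by
    have e : α * w.pi l = α * P * w1.pi l + α * Q * w2.pi l := by
      rw [hwconv l]; ring
    have h2 : 0 ≤ α * Q * w2.pi l :=
      mul_nonneg (mul_nonneg hα0.le hQ0.le) (w2.nonneg l)
    have := hkey l
    linarith
  have hbound2 : ∀ l, σA.pi l + α * Q * w2.pi l ≤ 1 := fun l => by
    have e : α * w.pi l = α * P * w1.pi l + α * Q * w2.pi l := by
      rw [hwconv l]; ring
    have h1 : 0 ≤ α * P * w1.pi l :=
      mul_nonneg (mul_nonneg hα0.le hP0.le) (w1.nonneg l)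
    have := hkey l
    linarith
  have hsc1 : scaledCompat σA w1 := by
    refine ⟨α * P, ssm (α * P) (mul_nonneg hα0.le hP0.le) (by nlinarith) w1,
      mul_pos hα0 hP0, by nlinarith, ⟨fun l => rfl, rfl⟩, ?_, ?_⟩
    · exact fun l v1 v2 h1 h2 => hA1 l v1 v2 h1 h2
    · exact fun l => hbound1 l
  have hsc2 : scaledCompat σA w2 := by
    refine ⟨α * Q, ssm (α * Q) (mul_nonneg hα0.le hQ0.le) (by nlinarith) w2,
      mul_pos hα0 hQ0, by nlinarith, ⟨fun l => rfl, rfl⟩, ?_, ?_⟩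
    · exact fun l v1 v2 h1 h2 => hA2 l v1 v2 h1 h2
    · exact fun l => hbound2 l
  -- apply the wands w1, w2
  have hcompat1 : compat σA (trunc σA w1) := by
    refine ⟨fun l v1 v2 h1 h2 => hA1 l v1 v2 h1 h2, fun l => ?_⟩
    rw [trunc_pi]
    have := min_le_right (w1.pi l) (1 - σA.pi l)
    linarith
  have hcompat2 : compat σA (trunc σA w2) := by
    refine ⟨fun l v1 v2 h1 h2 => hA2 l v1 v2 h1 h2, fun l => ?_⟩
    rw [trunc_pi]
    have := min_le_right (w2.pi l) (1 - σA.pi l)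
    linarith
  obtain ⟨ρ1, hρ1add, hρ1pi, hρ1hp⟩ := fadd_total hcompat1
  obtain ⟨ρ2, hρ2add, hρ2pi, hρ2hp⟩ := fadd_total hcompat2
  have hB1 : B ρ1 := hw1 σA ρ1 hA (by rw [Rtrans, if_pos hsc1]; exact hρ1add)
  have hB2 : B ρ2 := hw2 σA ρ2 hA (by rw [Rtrans, if_pos hsc2]; exact hρ2add)
  -- combine P • ρ1 and Q • ρ2
  have hτcomp : compat (ssm P hP0.le hP1 ρ1) (ssm Q hQ0.le hQ1 ρ2) := by
    constructor
    · intro l v1 v2 h1 h2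
      rw [ssm_hp, hρ1hp l] at h1
      rw [ssm_hp, hρ2hp l] at h2
      rcases hunion_eq_some h1 with hx | ⟨hx, hy⟩
      · rcases hunion_eq_some h2 with hx' | ⟨hx', hy'⟩
        · rw [hx] at hx'; exact Option.some.inj hx'
        · exact hA2 l v1 v2 hx (by rw [trunc_hp] at hy'; exact hy')
      · rcases hunion_eq_some h2 with hx' | ⟨hx', hy'⟩
        · exact (hA1 l v2 v1 hx' (by rw [trunc_hp] at hy; exact hy)).symm
        · rw [trunc_hp] at hy hy'
          exact hheap12 l v1 v2 hy hy'
    · intro l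
      rw [ssm_pi, ssm_pi]
      have e1 := mul_le_mul_of_nonneg_left (ρ1.le_one l) hP0.le
      have e2 := mul_le_mul_of_nonneg_left (ρ2.le_one l) hQ0.le
      linarith
  obtain ⟨τ12, hτadd, hτpi, hτhp⟩ := fadd_total hτcomp
  have hτstar : satStar (fracSat P B) (fracSat Q B) τ12 :=
    ⟨_, _, hτadd, ⟨ρ1, hB1, fun l => rfl, rfl⟩, ⟨ρ2, hB2, fun l => rfl, rfl⟩⟩
  have hfr := hBc P Q hP0 hQ0 (le_of_eq hPQ) τ12 hτstar
  rw [hPQ] at hfr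
  obtain ⟨σB, hσB, hsmB⟩ := hfr
  have hBτ : B τ12 := by
    have heq : σB = τ12 := by
      refine fext (fun l => ?_) (fun l => ?_)
      · have := hsmB.1 l; linarith
      · rw [hsmB.2]
    rw [← heq]; exact hσB
  -- the remainder r
  have hmin1 : ∀ l, (0:ℚ) ≤ min (w1.pi l) (1 - σA.pi l) :=
    fun l => le_min (w1.nonneg l) (by linarith [σA.le_one l])
  have hmin2 : ∀ l, (0:ℚ) ≤ min (w2.pi l) (1 - σA.pi l) :=
    fun l => le_min (w2.nonneg l) (by linarith [σA.le_one l])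
  have hconc : ∀ l, P * min (w1.pi l) (1 - σA.pi l) + Q * min (w2.pi l) (1 - σA.pi l)
      ≤ min (w.pi l) (1 - σA.pi l) := fun l => by
    refine le_min ?_ ?_
    · have e1 := mul_le_mul_of_nonneg_left (min_le_left (w1.pi l) (1 - σA.pi l)) hP0.le
      have e2 := mul_le_mul_of_nonneg_left (min_le_left (w2.pi l) (1 - σA.pi l)) hQ0.le
      have := hwconv l
      linarith
    · have e1 := mul_le_mul_of_nonneg_left (min_le_right (w1.pi l) (1 - σA.pi l)) hP0.le
      have e2 := mul_le_mul_of_nonneg_left (min_le_right (w2.pi l) (1 - σA.pi l)) hQ0.le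
      have e3 : P * (1 - σA.pi l) + Q * (1 - σA.pi l) = 1 - σA.pi l := by
        linear_combination (1 - σA.pi l) * hPQ
      linarith
  have hrex : ∃ r : FState L V,
      (∀ l, r.pi l = min (w.pi l) (1 - σA.pi l)
        - (P * min (w1.pi l) (1 - σA.pi l) + Q * min (w2.pi l) (1 - σA.pi l)))
      ∧ r.hp = w.hp := by
    refine ⟨⟨fun l => min (w.pi l) (1 - σA.pi l)
        - (P * min (w1.pi l) (1 - σA.pi l) + Q * min (w2.pi l) (1 - σA.pi l)),
      w.hp, ?_, ?_, ?_⟩, fun l => rfl, rfl⟩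
    · intro l
      show (0:ℚ) ≤ min (w.pi l) (1 - σA.pi l)
        - (P * min (w1.pi l) (1 - σA.pi l) + Q * min (w2.pi l) (1 - σA.pi l))
      have := hconc l
      linarith
    · intro l
      show min (w.pi l) (1 - σA.pi l)
        - (P * min (w1.pi l) (1 - σA.pi l) + Q * min (w2.pi l) (1 - σA.pi l)) ≤ 1
      have h1 := mul_nonneg hP0.le (hmin1 l)
      have h2 := mul_nonneg hQ0.le (hmin2 l)
      have := min_le_left (w.pi l) (1 - σA.pi l)
      have := w.le_one l
      linarith
    · intro l hl
      refine w.valid l ?_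
      have hl' : (0:ℚ) < min (w.pi l) (1 - σA.pi l)
        - (P * min (w1.pi l) (1 - σA.pi l) + Q * min (w2.pi l) (1 - σA.pi l)) := hl
      have h1 := mul_nonneg hP0.le (hmin1 l)
      have h2 := mul_nonneg hQ0.le (hmin2 l)
      have := min_le_left (w.pi l) (1 - σA.pi l)
      linarith
  obtain ⟨r, hrpi, hrhp⟩ := hrex
  -- τ12 ⊕ r = σ'
  have hτrcomp : compat τ12 r := by
    constructor
    · intro l v1 v2 h1 h2
      rw [hrhp, hW l] at h2
      rw [hτhp l, ssm_hp, ssm_hp, hρ1hp l, hρ2hp l, trunc_hp, trunc_hp] at h1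
      rcases hunion_eq_some h1 with hx | ⟨_, hy⟩
      · rcases hunion_eq_some hx with hx' | ⟨hx', hy'⟩
        · -- σA.hp l = some v1
          rcases hunion_eq_some h2 with hz | ⟨_, hz⟩
          · exact hA1 l v1 v2 hx' hz
          · exact hA2 l v1 v2 hx' hz
        · -- w1.hp l = some v1
          rcases hunion_eq_some h2 with hz | ⟨hz, hz'⟩
          · rw [hy'] at hz; exact Option.some.inj hz
          · rw [hy'] at hz; exact absurd hz (by simp)
      · rcases hunion_eq_some hy with hx' | ⟨hx', hy'⟩
        · rcases hunion_eq_some h2 with hz | ⟨_, hz⟩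
          · exact hA1 l v1 v2 hx' hz
          · exact hA2 l v1 v2 hx' hz
        · rcases hunion_eq_some h2 with hz | ⟨hz, hz'⟩
          · exact hheap12 l v2 v1 hz hy' ▸ rfl
          · rw [hy'] at hz'; exact Option.some.inj hz'
    · intro l
      rw [hrpi l, hτpi l, ssm_pi, ssm_pi, hρ1pi l, hρ2pi l, trunc_pi, trunc_pi]
      have e : P * σA.pi l + Q * σA.pi l = σA.pi l := by
        linear_combination (σA.pi l) * hPQ
      have := min_le_right (w.pi l) (1 - σA.pi l)
      linarith
  obtain ⟨σfin, hfinadd, hfinpi, hfinhp⟩ := fadd_total hτrcomp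
  have hfin : σfin = σ' := by
    refine fext (fun l => ?_) (fun l => ?_)
    · rw [hfinpi l, hrpi l, hτpi l, ssm_pi, ssm_pi, hρ1pi l, hρ2pi l,
        trunc_pi, trunc_pi, hApi l, trunc_pi]
      have e : P * σA.pi l + Q * σA.pi l = σA.pi l := by
        linear_combination (σA.pi l) * hPQ
      linarith
    · rw [hfinhp l, hrhp, hW l, hτhp l, ssm_hp, ssm_hp, hρ1hp l, hρ2hp l,
        trunc_hp, trunc_hp, hAhp l, trunc_hp, hW l]
      cases hx : σA.hp l with
      | some u => simp only [hunion_some_left]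
      | none =>
        simp only [hunion_none_left]
        exact hunion_self _
  exact hBi τ12 σ' r hBτ (by rw [← hfin]; exact hfinadd)
end

section
/- For any states σ_A and σ_w in the fractional-permission model, the truncated state R(σ_A, σ_w) is scalable with respect to σ_A: either σ_A is compatible with every element of scaled(R(σ_A, σ_w)), or σ_A is compatible with no element of scaled(R(σ_A, σ_w)). -/
/-- the truncated state `R(σA, σw)` is scalable with respect to
`σA`: either `σA` is compatible with every element of `scaled(R(σA, σw))`, or
with none of them. -/
theorem Rtrans_scalable {L V : Type} (σA σw : FState L V) :
    (∀ α t, 0 < α → α ≤ 1 → isSmul α (Rtrans σA σw) t → compat σA t) ∨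
    (∀ α t, 0 < α → α ≤ 1 → isSmul α (Rtrans σA σw) t → ¬ compat σA t) := by
  by_cases hsc : scaledCompat σA σw
  · left
    intro α t hα hα1 hsm
    have hR : Rtrans σA σw = trunc σA σw := if_pos hsc
    rw [hR] at hsm
    obtain ⟨β, u, hβ, hβ1, hsmu, hcu⟩ := hsc
    constructor
    · intro l v1 v2 h1 h2
      have ht : t.hp l = σw.hp l := by rw [hsm.2]; rfl
      have hu : u.hp l = σw.hp l := by rw [hsmu.2]
      exact hcu.1 l v1 v2 h1 (by rw [hu, ← ht]; exact h2)
    · intro l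
      have hpi : t.pi l = α * min (σw.pi l) (1 - σA.pi l) := hsm.1 l
      have hmin0 : 0 ≤ min (σw.pi l) (1 - σA.pi l) :=
        le_min (σw.nonneg l) (by linarith [σA.le_one l])
      have h2 : α * min (σw.pi l) (1 - σA.pi l) ≤ min (σw.pi l) (1 - σA.pi l) := by
        nlinarith
      have h3 : min (σw.pi l) (1 - σA.pi l) ≤ 1 - σA.pi l := min_le_right _ _
      rw [hpi]; linarith
  · right
    intro α t hα hα1 hsm hc
    have hR : Rtrans σA σw = σw := if_neg hsc
    rw [hR] at hsm
    exact hsc ⟨α, t, hα, hα1, hsm, hc⟩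
end

section
/- For each fixed state σ_A in the fractional-permission model, the map σ ↦ R(σ_A, σ) restricted to states heap-compatible with σ_A is monotonic with respect to the order ≽: if σ₂ ≽ σ₁ then R(σ_A, σ₂) ≽ R(σ_A, σ₁). -/
lemma FState.ext'_s16 {L V : Type} {a b : FState L V}
    (hpi : a.pi = b.pi) (hhp : a.hp = b.hp) : a = b := by
  cases a; cases b; simp_all

lemma fadd_some {L V : Type} {s1 r s : FState L V} (h : fadd s1 r = some s) :
    compat s1 r ∧ (∀ l, s.pi l = s1.pi l + r.pi l) ∧
      (∀ l, s.hp l = hunion (s1.hp l) (r.hp l)) := by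
  unfold fadd at h
  split at h
  · next hc =>
    injection h with h
    subst h
    exact ⟨hc, fun l => rfl, fun l => rfl⟩
  · simp at h

noncomputable def diffState {L V : Type} (a b : FState L V)
    (hpi : ∀ l, a.pi l ≤ b.pi l) : FState L V :=
  { pi := fun l => b.pi l - a.pi l,
    hp := b.hp,
    nonneg := fun l => by linarith [hpi l],
    le_one := fun l => by linarith [b.le_one l, a.nonneg l],
    valid := fun l hl => b.valid l (by linarith [a.nonneg l]) }

lemma fgeq_of_le {L V : Type} {a b : FState L V}
    (hhp : ∀ l v, a.hp l = some v → b.hp l = some v)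
    (hpi : ∀ l, a.pi l ≤ b.pi l) : fgeq b a := by
  refine ⟨diffState a b hpi, ?_⟩
  have hc : compat a (diffState a b hpi) := by
    constructor
    · intro l v1 v2 ha hb
      have := hhp l v1 ha
      simp only [diffState] at hb
      rw [this] at hb
      exact Option.some.inj hb
    · intro l
      simp only [diffState]
      linarith [b.le_one l]
  unfold fadd
  rw [dif_pos hc]
  congr 1
  apply FState.ext'_s16
  · funext l; simp only [diffState]; ring
  · funext l
    simp only [diffState]
    rcases ha : a.hp l with _ | v
    · simp [hunion]
    · simp [hunion, (hhp l v ha).symm]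

lemma scaledCompat_mono {L V : Type} {σA σ1 σ2 : FState L V}
    (h1 : heapCompat σA σ1)
    (hpi : ∀ l, σ1.pi l ≤ σ2.pi l)
    (h : scaledCompat σA σ2) : scaledCompat σA σ1 := by
  obtain ⟨α, t, hα0, hα1, ⟨htpi, hthp⟩, hcAt, hsum⟩ := h
  refine ⟨α, ⟨fun l => α * σ1.pi l, σ1.hp,
      fun l => mul_nonneg hα0.le (σ1.nonneg l),
      fun l => by nlinarith [σ1.nonneg l, σ1.le_one l],
      fun l hl => σ1.valid l (by nlinarith [σ1.nonneg l])⟩, hα0, hα1, ⟨fun l => rfl, rfl⟩, ?_, ?_⟩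
  · intro l v1 v2 ha hb
    exact h1 l v1 v2 ha hb
  · intro l
    have := hsum l
    rw [htpi l] at this
    have : α * σ1.pi l ≤ α * σ2.pi l := by
      exact mul_le_mul_of_nonneg_left (hpi l) hα0.le
    simp only
    calc σA.pi l + α * σ1.pi l ≤ σA.pi l + α * σ2.pi l := by linarith
    _ ≤ 1 := by rw [← htpi l]; exact hsum l

/-- for each fixed state `σA`, the map `σ ↦ R(σA, σ)` restricted
to states heap-compatible with `σA` is monotonic w.r.t. `≽`:
if `σ2 ≽ σ1` then `R(σA, σ2) ≽ R(σA, σ1)`. -/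
theorem Rtrans_monotonic {L V : Type} (σA σ1 σ2 : FState L V)
    (h1 : heapCompat σA σ1) (h2 : heapCompat σA σ2)
    (hle : fgeq σ2 σ1) :
    fgeq (Rtrans σA σ2) (Rtrans σA σ1) := by
  obtain ⟨r, hr⟩ := hle
  obtain ⟨hc, hpi, hhp⟩ := fadd_some hr
  have hle12 : ∀ l, σ1.pi l ≤ σ2.pi l := fun l => by
    rw [hpi l]; linarith [r.nonneg l]
  have hext : ∀ l v, σ1.hp l = some v → σ2.hp l = some v := fun l v hv => by
    rw [hhp l, hv]; rfl
  by_cases hs1 : scaledCompat σA σ1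
  · by_cases hs2 : scaledCompat σA σ2
    · unfold Rtrans; rw [if_pos hs1, if_pos hs2]
      refine fgeq_of_le ?_ ?_
      · exact hext
      · intro l
        exact min_le_min (hle12 l) le_rfl
    · unfold Rtrans; rw [if_pos hs1, if_neg hs2]
      refine fgeq_of_le ?_ ?_
      · exact hext
      · intro l
        exact le_trans (min_le_left _ _) (hle12 l)
  · have hs2 : ¬ scaledCompat σA σ2 := fun h => hs1 (scaledCompat_mono h1 hle12 h)
    unfold Rtrans; rw [if_neg hs1, if_neg hs2]
    exact ⟨r, hr⟩
end

section
/- In the fractional-permission model with stability, the separation-logic assertion pointsto(x.f, 5) * (pointsto(x.f, _) -* pointsto(x.f, 5)), where the wand is required to have a stable footprint, is unsatisfiable: no state satisfies full permission to location l with value 5 separately conjoined with a stable-footprint wand from some-value-at-l to value-5-at-l. -/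
/-- `pointsto(x.f, v5)`: full permission to `l0` with value `v5`. -/
def pointstoVal {L V : Type} (l0 : L) (v5 : V) (σ : FState L V) : Prop :=
  σ.pi l0 = 1 ∧ σ.hp l0 = some v5

/-- `pointsto(x.f, _)`: full permission to `l0` with some value. -/
def pointstoAny {L V : Type} (l0 : L) (σ : FState L V) : Prop :=
  σ.pi l0 = 1 ∧ (σ.hp l0).isSome

/-- The wand with a stable footprint. -/
def satStableWand {L V : Type} (A B : FState L V → Prop) (σw : FState L V) : Prop :=
  fstable σw ∧ ∀ σA σ, A σA → fadd σA σw = some σ → B σ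

/-- the assertion
`pointsto(x.f, 5) * (pointsto(x.f, _) -* pointsto(x.f, 5))`, where the wand is
required to have a stable footprint, is unsatisfiable (assuming some value
`v'` distinct from `v5` exists). -/
theorem stable_wand_assertion_unsat {L V : Type} (l0 : L) (v5 v' : V)
    (hv : v' ≠ v5) :
    ¬ ∃ σ : FState L V,
      satStar (pointstoVal l0 v5)
        (satStableWand (pointstoAny l0) (pointstoVal l0 v5)) σ := by
  rintro ⟨σ, σ1, σ2, hadd, ⟨hpi1, hhp1⟩, hstable, hwand⟩
  -- extract compatibility from fadd
  have hcomp : compat σ1 σ2 := by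
    by_contra hc
    simp [fadd, hc] at hadd
  -- σ2 has zero permission at l0
  have hpi2 : σ2.pi l0 = 0 := by
    have h1 := hcomp.2 l0
    have h2 := σ2.nonneg l0
    rw [hpi1] at h1
    linarith
  -- σ2 stable ⇒ σ2.hp l0 = none
  have hhp2 : σ2.hp l0 = none := by
    cases h : σ2.hp l0 with
    | none => rfl
    | some v =>
      have := (hstable l0).2 (by rw [h]; rfl)
      rw [hpi2] at this
      exact absurd this (lt_irrefl 0)
  -- build σA = single l0 v' 1
  set σA := single l0 v' 1 (by norm_num) (le_refl 1) with hσA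
  have hApi : σA.pi l0 = 1 := by simp [hσA, single]
  have hAhp : σA.hp l0 = some v' := by simp [hσA, single]
  have hcompA : compat σA σ2 := by
    constructor
    · intro l v1 v2 h1 h2
      by_cases hl : l = l0
      · subst hl; rw [hhp2] at h2; exact absurd h2 (by simp)
      · simp [hσA, single, hl] at h1
    · intro l
      by_cases hl : l = l0
      · subst hl; rw [hApi, hpi2]; norm_num
      · have : σA.pi l = 0 := by simp [hσA, single, hl]
        rw [this]; simpa using σ2.le_one l
  obtain ⟨σ', hσ'⟩ : ∃ σ', fadd σA σ2 = some σ' := by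
    simp [fadd, hcompA]
  have hB := hwand σA σ' ⟨hApi, by rw [hAhp]; rfl⟩ hσ'
  -- compute σ'.hp l0
  have hhp' : σ'.hp l0 = some v' := by
    rw [fadd, dif_pos hcompA] at hσ'
    have h2 : σ'.hp l0 = hunion (σA.hp l0) (σ2.hp l0) := by
      have := Option.some.inj hσ'
      rw [← this]
    rw [hAhp] at h2
    simpa [hunion] using h2
  rw [hB.2] at hhp'
  exact hv (Option.some.inj hhp').symm
end
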